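/- Let G = (V, E) be a finite graph and construct the MHR instance with one object h_j and one type t_j per vertex, one stayer agent per vertex (type t_j, endowment and allocation h_j), and L = |V| + 1 switcher agents of type t_j from h_j to h_k for each edge (v_j, v_k) ∈ E. Then G has an independent set of size at least k if and only if there exists H' ⊆ H with |H'| ≥ k such that the object-reduced allocation x(H') has an acyclic aggregate allocation graph. -/
import Mathlib


variable {V : Type*} [Fintype V] [DecidableEq V]

/-- Agents of the instance built from a graph `G`: one stayer per vertex, and
`L = |V| + 1` switchers per oriented edge. -/
def Agent (G : SimpleGraph V) : Type _ :=
  V ⊕ ({p : V × V // G.Adj p.1 p.2} × Fin (Fintype.card V + 1))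

/-- Type of an agent: stayer at `v` and switchers leaving `v` have type `v`. -/
def typ (G : SimpleGraph V) : Agent G → V :=
  Sum.elim id (fun s => s.1.val.1)

/-- Endowment: stayer at `v` owns `h_v`; a switcher on edge `(j,k)` owns `h_j`. -/
def endow (G : SimpleGraph V) : Agent G → V :=
  Sum.elim id (fun s => s.1.val.1)

/-- Allocation: stayer at `v` keeps `h_v`; a switcher on edge `(j,k)` gets `h_k`. -/
def alloc (G : SimpleGraph V) : Agent G → V :=
  Sum.elim id (fun s => s.1.val.2)

/-- Aggregate allocation graph of the object-reduced instance `x(H')`: only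
agents whose endowment and allocation both lie in `H'` are kept. -/
def redAG (G : SimpleGraph V) (H' : Set V) (h h' : V) : Prop :=
  ∃ i j : Agent G,
    endow G i ∈ H' ∧ alloc G i ∈ H' ∧ endow G j ∈ H' ∧ alloc G j ∈ H' ∧
    typ G i = typ G j ∧ endow G j = h ∧ alloc G j = h' ∧ h' ≠ h ∧ alloc G i = h

/-- `G` has an independent set of size at least `k` iff there is a
set `H'` of at least `k` objects whose object-reduced allocation has an acyclic
aggregate allocation graph (equivalently, is PI-rationalizable). -/
theorem stmt_19 (G : SimpleGraph V) (k : ℕ) :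
    (∃ S : Finset V, k ≤ S.card ∧ ∀ a ∈ S, ∀ b ∈ S, ¬ G.Adj a b) ↔
    (∃ H' : Finset V, k ≤ H'.card ∧
      ∀ h : V, ¬ Relation.TransGen (redAG G (H' : Set V)) h h) := by
  constructor
  · rintro ⟨S, hk, hind⟩
    refine ⟨S, hk, fun h ht => ?_⟩
    have hno : ∀ a b : V, ¬ redAG G (S : Set V) a b := by
      rintro a b ⟨i, j, hie, hia, hje, hja, htij, hjeq, hjaq, hne, hiaq⟩
      cases j with
      | inl v =>
        exact hne (by simp [endow, alloc] at hjeq hjaq; rw [← hjeq, ← hjaq])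
      | inr s =>
        obtain ⟨⟨⟨p, q⟩, hpq⟩, m⟩ := s
        simp only [endow, alloc, Sum.elim_inr, Finset.mem_coe] at hje hja
        exact hind p hje q hja hpq
    cases ht with
    | single hab => exact hno _ _ hab
    | tail _ hab => exact hno _ _ hab
  · rintro ⟨H', hk, hacyc⟩
    refine ⟨H', hk, fun a ha b hb hab => ?_⟩
    have h1 : redAG G (H' : Set V) a b :=
      ⟨Sum.inl a, Sum.inr ⟨⟨(a, b), hab⟩, 0⟩, ha, ha, ha, hb, rfl, rfl, rfl, hab.ne', rfl⟩
    have h2 : redAG G (H' : Set V) b a :=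
      ⟨Sum.inl b, Sum.inr ⟨⟨(b, a), hab.symm⟩, 0⟩, hb, hb, hb, ha, rfl, rfl, rfl, hab.ne, rfl⟩
    exact hacyc a ((Relation.TransGen.single h1).tail h2)
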